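/- (Characterization of the β-reweighting family.) Fix a probability measure q on Z and β ≥ 0. Then the set of reweighted distributions {q_w : w ∈ W_{β,q}} equals exactly the set of probability measures p on Z that are absolutely continuous with respect to q with dp/dq(z) ≤ 1+β for q-almost every z. Consequently, for any distance D between probability measures with D(p, p') = 0 iff p = p', the relaxed distance D_β(p, q) = min_{w ∈ W_{β,q}} D(p, q_w) satisfies D_β(p, q) = 0 if and only if dp/dq ≤ 1+β q-almost everywhere. -/

import Mathlib

open MeasureTheory
open scoped ENNReal

section Aux

variable {Z : Type*} [MeasurableSpace Z]

lemma reweight_aux (q : Measure Z) [IsProbabilityMeasure q] (β : ℝ) (hβ : 0 ≤ β) :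
    {p : Measure Z |
        ∃ w : Z → ℝ, Measurable w ∧ (∀ z, w z ∈ Set.Icc (0 : ℝ) 1) ∧
          (∫ z, w z ∂q) = 1 / (1 + β) ∧
          p = (∫⁻ z, ENNReal.ofReal (w z) ∂q)⁻¹ •
                q.withDensity (fun z => ENNReal.ofReal (w z))} =
      {p : Measure Z | IsProbabilityMeasure p ∧ p ≪ q ∧
        ∀ᵐ z ∂q, p.rnDeriv q z ≤ ENNReal.ofReal (1 + β)} := by
  have h1β : (0:ℝ) < 1 + β := by linarith
  have hk0 : ENNReal.ofReal (1 + β) ≠ 0 := by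
    simpa using h1β
  have hktop : ENNReal.ofReal (1 + β) ≠ ∞ := ENNReal.ofReal_ne_top
  ext p
  simp only [Set.mem_setOf_eq]
  constructor
  · rintro ⟨w, hw, hw01, hint, rfl⟩
    have hwint : Integrable w q := by
      refine (integrable_const (1:ℝ)).mono' hw.aestronglyMeasurable ?_
      filter_upwards with z
      rw [Real.norm_eq_abs, abs_of_nonneg (hw01 z).1]
      exact (hw01 z).2
    have hc : (∫⁻ z, ENNReal.ofReal (w z) ∂q) = ENNReal.ofReal (1 / (1 + β)) := by
      rw [← MeasureTheory.ofReal_integral_eq_lintegral_ofReal hwint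
        (Filter.Eventually.of_forall fun z => (hw01 z).1), hint]
    have hcval : ENNReal.ofReal (1 / (1 + β)) = (ENNReal.ofReal (1 + β))⁻¹ := by
      rw [one_div, ENNReal.ofReal_inv_of_pos h1β]
    have hc0 : (∫⁻ z, ENNReal.ofReal (w z) ∂q) ≠ 0 := by
      rw [hc, hcval]; simp [hktop]
    have hctop : (∫⁻ z, ENNReal.ofReal (w z) ∂q) ≠ ∞ := by
      rw [hc, hcval]; simp [hk0]
    have hcinv : (∫⁻ z, ENNReal.ofReal (w z) ∂q)⁻¹ = ENNReal.ofReal (1 + β) := by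
      rw [hc, hcval, inv_inv]
    have hmeasg : Measurable fun z => ENNReal.ofReal (w z) := hw.ennreal_ofReal
    refine ⟨?_, ?_, ?_⟩
    · constructor
      rw [Measure.smul_apply, withDensity_apply _ MeasurableSet.univ,
        setLIntegral_univ, smul_eq_mul, ENNReal.inv_mul_cancel hc0 hctop]
    · exact ((withDensity_absolutelyContinuous q _).smul_left _)
    · have hwd : ((∫⁻ z, ENNReal.ofReal (w z) ∂q)⁻¹ •
          q.withDensity (fun z => ENNReal.ofReal (w z)))
          = q.withDensity (fun z => (∫⁻ z, ENNReal.ofReal (w z) ∂q)⁻¹ *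
              ENNReal.ofReal (w z)) := by
        rw [← withDensity_smul _ hmeasg]; rfl
      rw [hwd]
      have hrd := Measure.rnDeriv_withDensity q
        ((measurable_const (a := (∫⁻ z, ENNReal.ofReal (w z) ∂q)⁻¹)).mul hmeasg)
      filter_upwards [hrd] with z hz
      rw [(by exact hz : (q.withDensity fun z => (∫⁻ z, ENNReal.ofReal (w z) ∂q)⁻¹ *
          ENNReal.ofReal (w z)).rnDeriv q z = (∫⁻ z, ENNReal.ofReal (w z) ∂q)⁻¹ * ENNReal.ofReal (w z)), hcinv]
      calc ENNReal.ofReal (1 + β) * ENNReal.ofReal (w z)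
          ≤ ENNReal.ofReal (1 + β) * 1 := by
            gcongr
            exact ENNReal.ofReal_le_one.mpr (hw01 z).2
        _ = ENNReal.ofReal (1 + β) := mul_one _
  · rintro ⟨hp, hpq, hbd⟩
    set f : Z → ℝ≥0∞ := p.rnDeriv q with hf
    have hfm : Measurable f := Measure.measurable_rnDeriv p q
    have hflt : ∀ᵐ z ∂q, f z < ∞ := Measure.rnDeriv_lt_top p q
    set w : Z → ℝ := fun z => min ((f z).toReal * (1 + β)⁻¹) 1 with hwdef
    have hwm : Measurable w := (hfm.ennreal_toReal.mul_const _).min measurable_const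
    have hw01 : ∀ z, w z ∈ Set.Icc (0:ℝ) 1 := fun z =>
      ⟨le_min (mul_nonneg ENNReal.toReal_nonneg (by positivity)) one_pos.le, min_le_right _ _⟩
    have hwae : ∀ᵐ z ∂q, w z = (f z).toReal * (1 + β)⁻¹ := by
      filter_upwards [hbd] with z hz
      have : (f z).toReal ≤ 1 + β := ENNReal.toReal_le_of_le_ofReal h1β.le hz
      have h2 : (f z).toReal * (1 + β)⁻¹ ≤ 1 := by
        rw [← div_eq_mul_inv, div_le_one h1β]; exact this
      simpa [hwdef] using min_eq_left h2
    have hint : (∫ z, w z ∂q) = 1 / (1 + β) := by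
      rw [integral_congr_ae hwae, integral_mul_const,
        Measure.integral_toReal_rnDeriv hpq]
      simp [one_div]
    have hwint : Integrable w q := by
      refine (integrable_const (1:ℝ)).mono' hwm.aestronglyMeasurable ?_
      filter_upwards with z
      rw [Real.norm_eq_abs, abs_of_nonneg (hw01 z).1]
      exact (hw01 z).2
    have hc : (∫⁻ z, ENNReal.ofReal (w z) ∂q) = (ENNReal.ofReal (1 + β))⁻¹ := by
      rw [← MeasureTheory.ofReal_integral_eq_lintegral_ofReal hwint
        (Filter.Eventually.of_forall fun z => (hw01 z).1), hint, one_div,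
        ENNReal.ofReal_inv_of_pos h1β]
    refine ⟨w, hwm, hw01, hint, ?_⟩
    have hgae : (fun z => ENNReal.ofReal (w z)) =ᵐ[q]
        fun z => (ENNReal.ofReal (1 + β))⁻¹ * f z := by
      filter_upwards [hwae, hflt] with z hz hlt
      rw [hz, ENNReal.ofReal_mul ENNReal.toReal_nonneg,
        ENNReal.ofReal_toReal hlt.ne, ENNReal.ofReal_inv_of_pos h1β, mul_comm]
    have hfun : (fun z => (ENNReal.ofReal (1 + β))⁻¹ * f z)
        = (ENNReal.ofReal (1 + β))⁻¹ • f := rfl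
    rw [withDensity_congr_ae hgae, hc, inv_inv, hfun,
      withDensity_smul' _ _ (ENNReal.inv_ne_top.mpr hk0),
      Measure.withDensity_rnDeriv_eq p q hpq, smul_smul,
      ENNReal.mul_inv_cancel hk0 hktop, one_smul]

end Aux

theorem reweighting_family_characterization
    {Z : Type*} [MeasurableSpace Z]
    (q : Measure Z) [IsProbabilityMeasure q] (β : ℝ) (hβ : 0 ≤ β) :
    ({p : Measure Z |
        ∃ w : Z → ℝ, Measurable w ∧ (∀ z, w z ∈ Set.Icc (0 : ℝ) 1) ∧
          (∫ z, w z ∂q) = 1 / (1 + β) ∧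
          p = (∫⁻ z, ENNReal.ofReal (w z) ∂q)⁻¹ •
                q.withDensity (fun z => ENNReal.ofReal (w z))} =
      {p : Measure Z | IsProbabilityMeasure p ∧ p ≪ q ∧
        ∀ᵐ z ∂q, p.rnDeriv q z ≤ ENNReal.ofReal (1 + β)}) ∧
    (∀ D : Measure Z → Measure Z → ℝ, (∀ a b, D a b = 0 ↔ a = b) →
      ∀ p : Measure Z, IsProbabilityMeasure p →
        ((∃ w : Z → ℝ, Measurable w ∧ (∀ z, w z ∈ Set.Icc (0 : ℝ) 1) ∧
            (∫ z, w z ∂q) = 1 / (1 + β) ∧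
            D p ((∫⁻ z, ENNReal.ofReal (w z) ∂q)⁻¹ •
                  q.withDensity (fun z => ENNReal.ofReal (w z))) = 0) ↔
          (p ≪ q ∧ ∀ᵐ z ∂q, p.rnDeriv q z ≤ ENNReal.ofReal (1 + β)))) := by
  refine ⟨reweight_aux q β hβ, ?_⟩
  intro D hD p hp
  constructor
  · rintro ⟨w, hwm, hw01, hint, hDz⟩
    have hpw := (hD _ _).mp hDz
    have hmem : p ∈ {p : Measure Z | IsProbabilityMeasure p ∧ p ≪ q ∧
        ∀ᵐ z ∂q, p.rnDeriv q z ≤ ENNReal.ofReal (1 + β)} := by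
      rw [← reweight_aux q β hβ]
      exact ⟨w, hwm, hw01, hint, hpw⟩
    exact ⟨hmem.2.1, hmem.2.2⟩
  · rintro ⟨hpq, hbd⟩
    have hmem : p ∈ {p : Measure Z |
        ∃ w : Z → ℝ, Measurable w ∧ (∀ z, w z ∈ Set.Icc (0 : ℝ) 1) ∧
          (∫ z, w z ∂q) = 1 / (1 + β) ∧
          p = (∫⁻ z, ENNReal.ofReal (w z) ∂q)⁻¹ •
                q.withDensity (fun z => ENNReal.ofReal (w z))} := by
      rw [reweight_aux q β hβ]
      exact ⟨hp, hpq, hbd⟩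
    obtain ⟨w, hwm, hw01, hint, hpw⟩ := hmem
    exact ⟨w, hwm, hw01, hint, (hD _ _).mpr hpw⟩
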